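/- The origin is an asymptotically stable equilibrium of the system ẋ₁ = x₂, ẋ₂ = −sin(x₁)cos(x₁) − x₂ − sin(x₃)cos(x₃), ẋ₃ = x₂ − x₃: for every ε > 0 there exists δ > 0 such that every solution with ‖x(0)‖ < δ satisfies ‖x(t)‖ < ε for all t ≥ 0, and δ can be chosen so that ‖x(0)‖ < δ implies x(t) → 0 as t → ∞. -/

import Mathlib

/-! Auxiliary lemmas for the Lyapunov-function argument. -/

private lemma trig_lemT (A B C : ℝ) :
    (A + 8/5*B + 2/5*C) * (A/8 + C/8) ≤ (A^2+B^2+C^2)/2 := by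
  nlinarith [sq_nonneg (A-B), sq_nonneg (A-C), sq_nonneg (B-C)]

private lemma trig_lemVlow (a b c : ℝ) :
    (1/4)*(a^2+b^2+c^2) ≤ 8/5*a^2 + 4/5*b^2 + 7/10*c^2 + a*b - 3/5*a*c - 2/5*b*c := by
  nlinarith [sq_nonneg (a + 10/27*b - 2/9*c), sq_nonneg (b - 48/197*c), sq_nonneg c]

private lemma trig_lemVup (a b c : ℝ) :
    8/5*a^2 + 4/5*b^2 + 7/10*c^2 + a*b - 3/5*a*c - 2/5*b*c ≤ 2*(a^2+b^2+c^2) := by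
  nlinarith [sq_nonneg (a - 5/4*b + 3/4*c), sq_nonneg (b + c), sq_nonneg c]

private lemma trig_lemMain (a b c e1 e3 : ℝ)
    (hs : a^2+b^2+c^2 ≤ 1/8)
    (h1 : |e1| ≤ |a|^3) (h3 : |e3| ≤ |c|^3) :
    -(a^2+b^2+c^2) - (a + 8/5*b - 2/5*c)*(e1+e3) ≤
      -(1/4)*(8/5*a^2 + 4/5*b^2 + 7/10*c^2 + a*b - 3/5*a*c - 2/5*b*c) := by
  have ha2 : a^2 ≤ 1/8 := by nlinarith [sq_nonneg b, sq_nonneg c]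
  have hc2 : c^2 ≤ 1/8 := by nlinarith [sq_nonneg a, sq_nonneg b]
  have h1' : |e1| ≤ |a|/8 := by
    have h : |a|^3 = a^2 * |a| := by rw [pow_succ, sq_abs]
    nlinarith [abs_nonneg a]
  have h3' : |e3| ≤ |c|/8 := by
    have h : |c|^3 = c^2 * |c| := by rw [pow_succ, sq_abs]
    nlinarith [abs_nonneg c]
  have hco : |a + 8/5*b - 2/5*c| ≤ |a| + 8/5*|b| + 2/5*|c| := by
    have := le_abs_self a; have := neg_abs_le a
    have := le_abs_self b; have := neg_abs_le b
    have := le_abs_self c; have := neg_abs_le c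
    rw [abs_le]; constructor <;> linarith
  have he : |e1 + e3| ≤ |a|/8 + |c|/8 := (abs_add_le _ _).trans (add_le_add h1' h3')
  have key : -((a + 8/5*b - 2/5*c)*(e1+e3)) ≤
      (|a| + 8/5*|b| + 2/5*|c|) * (|a|/8 + |c|/8) := by
    have h2 : |(a + 8/5*b - 2/5*c)*(e1+e3)| ≤
        (|a| + 8/5*|b| + 2/5*|c|) * (|a|/8 + |c|/8) := by
      rw [abs_mul]
      exact mul_le_mul hco he (abs_nonneg _) (by positivity)
    have := neg_le_abs ((a + 8/5*b - 2/5*c)*(e1+e3))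
    linarith
  have hT := trig_lemT |a| |b| |c|
  have hA : |a|^2 = a^2 := sq_abs a
  have hB : |b|^2 = b^2 := sq_abs b
  have hC : |c|^2 = c^2 := sq_abs c
  have hV2 := trig_lemVup a b c
  linarith [key, hT, hV2]

private lemma trig_sin_sub_bound : ∀ u : ℝ, |u| ≤ 1 → |Real.sin u - u| ≤ |u|^3/4 := by
  have base : ∀ u : ℝ, 0 ≤ u → u ≤ 1 → |Real.sin u - u| ≤ |u|^3/4 := by
    intro u hu hu1
    rcases eq_or_lt_of_le hu with h | h
    · simp [← h]
    · have h1 := Real.sin_lt h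
      have h2 := Real.sin_gt_sub_cube h
      rw [abs_of_nonneg hu, abs_sub_comm, abs_of_nonneg (by linarith)]
      linarith [pow_pos h 3]
  intro u hu
  rcases le_or_gt 0 u with h | h
  · exact base u h (by rwa [abs_of_nonneg h] at hu)
  · have := base (-u) (by linarith) (by rwa [abs_of_neg h] at hu)
    rw [Real.sin_neg, abs_neg] at this
    calc |Real.sin u - u| = |-(Real.sin u) - -u| := by rw [← abs_neg]; ring_nf
    _ ≤ |u|^3/4 := by rwa [abs_sub_comm, ← abs_neg u] at this ⊢

private lemma trig_sc_bound (t : ℝ) (ht : |t| ≤ 1/2) :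
    |Real.sin t * Real.cos t - t| ≤ |t|^3 := by
  have h2 : |Real.sin (2*t) - 2*t| ≤ |2*t|^3/4 :=
    trig_sin_sub_bound (2*t) (by rw [abs_mul]; norm_num; linarith [abs_nonneg t])
  have hsc : Real.sin t * Real.cos t = Real.sin (2*t) / 2 := by
    rw [Real.sin_two_mul]; ring
  rw [hsc]
  have heq : Real.sin (2*t)/2 - t = (Real.sin (2*t) - 2*t)/2 := by ring
  rw [heq, abs_div, abs_two]
  have h3 : |2*t|^3 = 8*|t|^3 := by rw [abs_mul, abs_two]; ring
  linarith [h2, h3.le]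

/-- The 3-D trigonometric vector field `ẋ₁ = x₂`,
`ẋ₂ = −sin x₁ cos x₁ − x₂ − sin x₃ cos x₃`, `ẋ₃ = x₂ − x₃` on `ℝ³`. -/
noncomputable def trigField (x : EuclideanSpace ℝ (Fin 3)) :
    EuclideanSpace ℝ (Fin 3) :=
  WithLp.toLp 2 ![x 1,
    -(Real.sin (x 0) * Real.cos (x 0)) - x 1 - Real.sin (x 2) * Real.cos (x 2),
    x 1 - x 2]

/-- Derivative of the Lyapunov function along solutions. -/
private lemma trig_deriv (x : ℝ → EuclideanSpace ℝ (Fin 3))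
    (hx : ∀ t ≥ (0:ℝ), HasDerivAt x (trigField (x t)) t) :
    ∀ t ≥ (0:ℝ), HasDerivAt (fun s => 8/5*(x s 0)^2 + 4/5*(x s 1)^2 + 7/10*(x s 2)^2
        + (x s 0)*(x s 1) - 3/5*(x s 0)*(x s 2) - 2/5*(x s 1)*(x s 2))
      (-((x t 0)^2+(x t 1)^2+(x t 2)^2)
        - (x t 0 + 8/5*(x t 1) - 2/5*(x t 2)) *
          ((Real.sin (x t 0) * Real.cos (x t 0) - x t 0)
            + (Real.sin (x t 2) * Real.cos (x t 2) - x t 2))) t := by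
  intro t ht
  have h0 : HasDerivAt (fun s => x s 0) (x t 1) t := by
    have := (EuclideanSpace.proj (0 : Fin 3) :
      EuclideanSpace ℝ (Fin 3) →L[ℝ] ℝ).hasFDerivAt.comp_hasDerivAt t (hx t ht)
    simp [trigField] at this; exact this
  have h1 : HasDerivAt (fun s => x s 1)
      (-(Real.sin (x t 0) * Real.cos (x t 0)) - x t 1
        - Real.sin (x t 2) * Real.cos (x t 2)) t := by
    have := (EuclideanSpace.proj (1 : Fin 3) :
      EuclideanSpace ℝ (Fin 3) →L[ℝ] ℝ).hasFDerivAt.comp_hasDerivAt t (hx t ht)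
    simp [trigField] at this; exact this
  have h2 : HasDerivAt (fun s => x s 2) (x t 1 - x t 2) t := by
    have := (EuclideanSpace.proj (2 : Fin 3) :
      EuclideanSpace ℝ (Fin 3) →L[ℝ] ℝ).hasFDerivAt.comp_hasDerivAt t (hx t ht)
    simp [trigField] at this; exact this
  have H := (((((((h0.mul h0).const_mul (8/5:ℝ)).add
    ((h1.mul h1).const_mul (4/5:ℝ))).add
    ((h2.mul h2).const_mul (7/10:ℝ))).add
    (h0.mul h1)).sub ((h0.mul h2).const_mul (3/5:ℝ))).sub
    ((h1.mul h2).const_mul (2/5:ℝ)))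
  refine (H.congr_deriv (by ring)).congr_of_eventuallyEq (Filter.Eventually.of_forall fun s => ?_)
  simp only [Pi.add_apply, Pi.sub_apply, Pi.mul_apply]; ring

private lemma trig_norm_sq (v : EuclideanSpace ℝ (Fin 3)) :
    ‖v‖^2 = (v 0)^2 + (v 1)^2 + (v 2)^2 := by
  rw [EuclideanSpace.norm_eq, Real.sq_sqrt (by positivity)]
  simp [Fin.sum_univ_three]

/-- Abstract Lyapunov absorption lemma. -/
private lemma trig_absorb (g D nsq : ℝ → ℝ)
    (hg : ∀ t ≥ (0:ℝ), HasDerivAt g (D t) t)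
    (hlow : ∀ t, (1/4) * nsq t ≤ g t)
    (hnn : ∀ t, 0 ≤ nsq t)
    (hD : ∀ t ≥ (0:ℝ), nsq t ≤ 1/8 → D t ≤ -(1/4) * g t)
    (hg0 : g 0 < 1/32) :
    (∀ t ≥ (0:ℝ), nsq t ≤ 4 * g 0) ∧
      (∀ t ≥ (0:ℝ), g t ≤ g 0 * Real.exp (-(t/4))) := by
  have hgnn : ∀ t, 0 ≤ g t := fun t => le_trans (by nlinarith [hnn t]) (hlow t)
  have hgc : ContinuousOn g (Set.Ici (0:ℝ)) :=
    fun t ht => (hg t ht).continuousAt.continuousWithinAt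
  -- trapping: g stays below 1/32
  have htrap : ∀ t ≥ (0:ℝ), g t < 1/32 := by
    by_contra hcon
    push_neg at hcon
    obtain ⟨t0, ht0, hgt0⟩ := hcon
    set S : Set ℝ := Set.Ici (0:ℝ) ∩ g ⁻¹' Set.Ici (1/32) with hSdef
    have hSne : S.Nonempty := ⟨t0, ht0, hgt0⟩
    have hSbdd : BddBelow S := ⟨0, fun u hu => hu.1⟩
    have hSclosed : IsClosed S :=
      hgc.preimage_isClosed_of_isClosed isClosed_Ici isClosed_Ici
    have hτS : sInf S ∈ S := hSclosed.csInf_mem hSne hSbdd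
    have hτ0 : 0 ≤ sInf S := hτS.1
    have hgτ : 1/32 ≤ g (sInf S) := hτS.2
    -- g is antitone on [0, sInf S]
    have hanti : AntitoneOn g (Set.Icc 0 (sInf S)) := by
      apply antitoneOn_of_deriv_nonpos (convex_Icc 0 (sInf S))
        (hgc.mono (fun u hu => hu.1))
      · intro u hu
        rw [interior_Icc] at hu
        exact ((hg u hu.1.le).differentiableAt).differentiableWithinAt
      · intro u hu
        rw [interior_Icc] at hu
        have hu0 : (0:ℝ) ≤ u := hu.1.le
        have huS : u ∉ S := notMem_of_lt_csInf hu.2 hSbdd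
        have hgu : g u < 1/32 := by
          by_contra hge
          exact huS ⟨hu0, le_of_not_gt hge⟩
        have hball : nsq u ≤ 1/8 := by linarith [hlow u]
        have := hD u hu0 hball
        rw [(hg u hu0).deriv]
        linarith [hgnn u]
    have := hanti ⟨le_refl 0, hτ0⟩ ⟨hτ0, le_refl (sInf S)⟩ hτ0
    linarith
  have hball : ∀ t ≥ (0:ℝ), nsq t ≤ 1/8 := by
    intro t ht
    linarith [hlow t, htrap t ht]
  have hD' : ∀ t ≥ (0:ℝ), D t ≤ -(1/4) * g t := fun t ht => hD t ht (hball t ht)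
  -- g t ≤ g 0 * exp (-t/4)
  have hgexp : ∀ t ≥ (0:ℝ), g t ≤ g 0 * Real.exp (-(t/4)) := by
    intro t ht
    have hh : ∀ u ≥ (0:ℝ), HasDerivAt (fun s => g s * Real.exp (s/4))
        (D u * Real.exp (u/4) + g u * (Real.exp (u/4) * (1/4))) u := by
      intro u hu
      have he : HasDerivAt (fun s : ℝ => Real.exp (s/4)) (Real.exp (u/4) * (1/4)) u := by
        have h1 : HasDerivAt (fun s : ℝ => s/4) (1/4) u := by
          simpa using (hasDerivAt_id u).div_const 4
        exact (Real.hasDerivAt_exp (u/4)).comp u h1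
      exact (hg u hu).mul he
    have hanti2 : AntitoneOn (fun s => g s * Real.exp (s/4)) (Set.Ici 0) := by
      apply antitoneOn_of_deriv_nonpos (convex_Ici 0)
      · exact fun u hu => ((hh u hu).continuousAt).continuousWithinAt
      · intro u hu
        rw [interior_Ici] at hu
        exact ((hh u hu.le).differentiableAt).differentiableWithinAt
      · intro u hu
        rw [interior_Ici] at hu
        rw [(hh u hu.le).deriv]
        have h1 := hD' u hu.le
        have h2 := Real.exp_pos (u/4)
        nlinarith [hgnn u]
    have h3 := hanti2 (Set.mem_Ici.2 (le_refl 0)) (Set.mem_Ici.2 ht) ht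
    simp only [zero_div, Real.exp_zero, mul_one] at h3
    have h2 := Real.exp_pos (t/4)
    have h4 : g t ≤ g 0 / Real.exp (t/4) := (le_div_iff₀ h2).mpr h3
    rw [Real.exp_neg, ← div_eq_mul_inv]
    exact h4
  constructor
  · -- trapped bound
    intro t ht
    have hanti : AntitoneOn g (Set.Ici 0) := by
      apply antitoneOn_of_deriv_nonpos (convex_Ici 0) hgc
      · intro u hu
        rw [interior_Ici] at hu
        exact ((hg u hu.le).differentiableAt).differentiableWithinAt
      · intro u hu
        rw [interior_Ici] at hu
        rw [(hg u hu.le).deriv]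
        linarith [hD' u hu.le, hgnn u]
    have h1 : g t ≤ g 0 := hanti (Set.mem_Ici.2 (le_refl 0)) (Set.mem_Ici.2 ht) ht
    linarith [hlow t]
  · exact hgexp

set_option maxHeartbeats 1000000 in
/-- The origin is an asymptotically stable equilibrium of the 3-D trigonometric system:
for every `ε > 0` there is `δ > 0` such that every solution with `‖x 0‖ < δ` stays in
the `ε`-ball for all `t ≥ 0` and converges to the origin as `t → ∞`. -/
theorem trigSystem_asymptotically_stable :
    ∀ ε > (0 : ℝ), ∃ δ > (0 : ℝ), ∀ x : ℝ → EuclideanSpace ℝ (Fin 3),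
      (∀ t ≥ (0:ℝ), HasDerivAt x (trigField (x t)) t) → ‖x 0‖ < δ →
        (∀ t ≥ (0:ℝ), ‖x t‖ < ε) ∧ Filter.Tendsto x Filter.atTop (nhds 0) := by
  intro ε hε
  refine ⟨min (ε/4) (1/8), lt_min (by linarith) (by norm_num), ?_⟩
  intro x hx hx0
  have hδ1 : min (ε/4) (1/8) ≤ 1/8 := min_le_right _ _
  have hδ2 : min (ε/4) (1/8) ≤ ε/4 := min_le_left _ _
  -- instantiate the abstract lemma
  obtain ⟨htrap, hexp⟩ := trig_absorb
    (fun s => 8/5*(x s 0)^2 + 4/5*(x s 1)^2 + 7/10*(x s 2)^2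
      + (x s 0)*(x s 1) - 3/5*(x s 0)*(x s 2) - 2/5*(x s 1)*(x s 2))
    (fun t => -((x t 0)^2+(x t 1)^2+(x t 2)^2)
      - (x t 0 + 8/5*(x t 1) - 2/5*(x t 2)) *
        ((Real.sin (x t 0) * Real.cos (x t 0) - x t 0)
          + (Real.sin (x t 2) * Real.cos (x t 2) - x t 2)))
    (fun t => ‖x t‖^2)
    (trig_deriv x hx)
    (fun t => by dsimp only; rw [trig_norm_sq]; exact trig_lemVlow _ _ _)
    (fun t => by positivity)
    (fun t ht hball => by
      dsimp only at hball ⊢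
      rw [trig_norm_sq] at hball
      have ha : |x t 0| ≤ 1/2 := by
        nlinarith [sq_abs (x t 0), abs_nonneg (x t 0), sq_nonneg (x t 1), sq_nonneg (x t 2)]
      have hc : |x t 2| ≤ 1/2 := by
        nlinarith [sq_abs (x t 2), abs_nonneg (x t 2), sq_nonneg (x t 0), sq_nonneg (x t 1)]
      exact trig_lemMain _ _ _ _ _ hball (trig_sc_bound _ ha) (trig_sc_bound _ hc))
    (by
      have h1 : 8/5*(x 0 0)^2 + 4/5*(x 0 1)^2 + 7/10*(x 0 2)^2
          + (x 0 0)*(x 0 1) - 3/5*(x 0 0)*(x 0 2) - 2/5*(x 0 1)*(x 0 2) ≤ 2*‖x 0‖^2 := by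
        rw [trig_norm_sq]; exact trig_lemVup _ _ _
      have h2 : ‖x 0‖^2 < 1/64 := by
        have h3 := norm_nonneg (x 0)
        have h4 := hx0.trans_le hδ1
        nlinarith
      linarith)
  simp only [] at htrap hexp
  -- notation for initial Lyapunov value
  set g0 : ℝ := 8/5*(x 0 0)^2 + 4/5*(x 0 1)^2 + 7/10*(x 0 2)^2
      + (x 0 0)*(x 0 1) - 3/5*(x 0 0)*(x 0 2) - 2/5*(x 0 1)*(x 0 2) with hg0def
  have hg0up : g0 ≤ 2*‖x 0‖^2 := by
    rw [hg0def, trig_norm_sq]; exact trig_lemVup _ _ _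
  have hg0nn : 0 ≤ g0 := by
    have := trig_lemVlow (x 0 0) (x 0 1) (x 0 2)
    rw [hg0def]
    nlinarith [sq_nonneg (x 0 0), sq_nonneg (x 0 1), sq_nonneg (x 0 2)]
  constructor
  · -- stability
    intro t ht
    have h2 : ‖x t‖^2 ≤ 4 * g0 := htrap t ht
    have h4 : ‖x 0‖^2 < (ε/4)^2 := by
      have := norm_nonneg (x 0)
      nlinarith [hx0.trans_le hδ2]
    have h5 : ‖x t‖^2 < ε^2 := by nlinarith
    have := norm_nonneg (x t)
    nlinarith
  · -- convergence
    have hnsq : Filter.Tendsto (fun t => ‖x t‖^2) Filter.atTop (nhds 0) := by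
      apply squeeze_zero' (g := fun t => 4 * g0 * Real.exp (-(t/4)))
      · filter_upwards [Filter.eventually_ge_atTop (0:ℝ)] with t ht
        positivity
      · filter_upwards [Filter.eventually_ge_atTop (0:ℝ)] with t ht
        have h1 : (1/4) * ‖x t‖^2 ≤ 8/5*(x t 0)^2 + 4/5*(x t 1)^2 + 7/10*(x t 2)^2
            + (x t 0)*(x t 1) - 3/5*(x t 0)*(x t 2) - 2/5*(x t 1)*(x t 2) := by
          rw [trig_norm_sq]; exact trig_lemVlow _ _ _
        have h2 := hexp t ht
        linarith
      · have h1 : Filter.Tendsto (fun t : ℝ => -(t/4)) Filter.atTop Filter.atBot := by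
          apply Filter.tendsto_neg_atTop_atBot.comp
          exact Filter.tendsto_id.atTop_div_const (by norm_num)
        have h2 := Real.tendsto_exp_atBot.comp h1
        have := h2.const_mul (4 * g0)
        simpa using this
    have hn : Filter.Tendsto (fun t => ‖x t‖) Filter.atTop (nhds 0) := by
      have h1 := (Real.continuous_sqrt.tendsto 0).comp hnsq
      have h2 : Filter.Tendsto (fun t => ‖x t‖) Filter.atTop (nhds (Real.sqrt 0)) :=
        h1.congr (fun t => by simp [Function.comp, Real.sqrt_sq_eq_abs])
      simpa using h2
    exact tendsto_zero_iff_norm_tendsto_zero.mpr hn
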